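/- Let δ¹, δ² > 0, s ∈ (0,1), R₀¹ < R₀², and let f_w¹, f_w² be Monod functions. For λ > 0 define Λ_w⁰(λ) = (s/δ¹ + (1−s)/δ²) · E[Φ(B_λ)], where B_λ follows a Beta(sλ/δ¹, (1−s)λ/δ²) law and Φ(x) = δ²(1 − x)(f_w¹((R₀² − R₀¹)x + R₀¹) − δ¹) + δ¹ x (f_w²((R₀² − R₀¹)x + R₀¹) − δ²). Then lim_{λ→+∞} Λ_w⁰(λ) = (1−s)(f_w¹(R^∞) − δ¹) + s(f_w²(R^∞) − δ²), where R^∞ = ((1−s)δ¹R₀¹ + sδ²R₀²)/((1−s)δ¹ + sδ²), and lim_{λ→0⁺} Λ_w⁰(λ) = (1−s)(f_w¹(R₀¹) − δ¹) + s(f_w²(R₀²) − δ²). -/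

import Mathlib

open Filter MeasureTheory intervalIntegral

/-- Monod consumption function `f(R) = aR/(b+R)`. -/
noncomputable def monod (a b r : ℝ) : ℝ := a * r / (b + r)

/-- `Φ(x) = δ²(1−x)(f¹((R₀²−R₀¹)x+R₀¹)−δ¹) + δ¹x(f²((R₀²−R₀¹)x+R₀¹)−δ²)`. -/
noncomputable def Phi (a1 b1 a2 b2 δ1 δ2 R01 R02 x : ℝ) : ℝ :=
  δ2 * (1 - x) * (monod a1 b1 ((R02 - R01) * x + R01) - δ1)
    + δ1 * x * (monod a2 b2 ((R02 - R01) * x + R01) - δ2)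

/-- The invasion rate `Λ_w⁰(λ) = (s/δ¹ + (1−s)/δ²) E[Φ(B_λ)]`,
`B_λ ∼ Beta(sλ/δ¹, (1−s)λ/δ²)`, written with the Beta density. -/
noncomputable def invasionRate0 (a1 b1 a2 b2 δ1 δ2 R01 R02 s lam : ℝ) : ℝ :=
  (s / δ1 + (1 - s) / δ2) *
    ((∫ x in (0:ℝ)..1, Phi a1 b1 a2 b2 δ1 δ2 R01 R02 x
        * (x ^ (s * lam / δ1 - 1) * (1 - x) ^ ((1 - s) * lam / δ2 - 1)))
      / (∫ x in (0:ℝ)..1,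
          x ^ (s * lam / δ1 - 1) * (1 - x) ^ ((1 - s) * lam / δ2 - 1)))

section Aux

open Real Set

variable {g : ℝ → ℝ} {α β L M : ℝ}

noncomputable def betaJ (g : ℝ → ℝ) (α β : ℝ) : ℝ :=
  ∫ x in (0:ℝ)..1, g x * (x ^ (α - 1) * (1 - x) ^ (β - 1))

lemma cont_one_sub_rpow {β : ℝ} {s : Set ℝ} (hs : ∀ x ∈ s, (1:ℝ) - x ≠ 0) :
    ContinuousOn (fun x : ℝ => (1 - x) ^ (β - 1)) s :=
  (continuousOn_const.sub continuousOn_id).rpow_const fun x hx => Or.inl (hs x hx)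

lemma betaJ_integrable_left {g : ℝ → ℝ} {α β : ℝ} (hα : 0 < α)
    (hg : ContinuousOn g (Icc 0 1)) :
    IntervalIntegrable (fun x => g x * (x ^ (α - 1) * (1 - x) ^ (β - 1)))
      volume 0 (1/2) := by
  have h : (fun x : ℝ => g x * (x ^ (α - 1) * (1 - x) ^ (β - 1)))
      = fun x : ℝ => x ^ (α - 1) * ((1 - x) ^ (β - 1) * g x) := by
    funext x; ring
  rw [h]
  have huIcc : uIcc (0:ℝ) (1/2) = Icc 0 (1/2) := uIcc_of_le (by norm_num)
  refine (intervalIntegrable_rpow' (by linarith)).mul_continuousOn ?_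
  rw [huIcc]
  refine ContinuousOn.mul (cont_one_sub_rpow fun x hx => ?_) (hg.mono ?_)
  · rcases hx with ⟨_, h2⟩; intro h; nlinarith
  · exact Icc_subset_Icc le_rfl (by norm_num)

lemma betaJ_integrable_right {g : ℝ → ℝ} {α β : ℝ} (hβ : 0 < β)
    (hg : ContinuousOn g (Icc 0 1)) :
    IntervalIntegrable (fun x => g x * (x ^ (α - 1) * (1 - x) ^ (β - 1)))
      volume (1/2) 1 := by
  have h : (fun x : ℝ => g x * (x ^ (α - 1) * (1 - x) ^ (β - 1)))
      = fun x : ℝ => (1 - x) ^ (β - 1) * (x ^ (α - 1) * g x) := by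
    funext x; ring
  rw [h]
  have hbase : IntervalIntegrable (fun x : ℝ => (1 - x) ^ (β - 1)) volume (1/2) 1 := by
    have := (intervalIntegrable_rpow' (r := β - 1) (by linarith)
      (a := 0) (b := 1/2)).comp_sub_left 1
    norm_num at this
    exact this.symm
  refine hbase.mul_continuousOn ?_
  rw [uIcc_of_le (by norm_num : (1:ℝ)/2 ≤ 1)]
  refine ContinuousOn.mul (ContinuousOn.rpow_const continuousOn_id fun x hx => ?_)
    (hg.mono (Icc_subset_Icc (by norm_num) le_rfl))
  rcases hx with ⟨h1, _⟩; left; intro h; rw [h] at h1; norm_num at h1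

lemma betaJ_integrable {g : ℝ → ℝ} {α β : ℝ} (hα : 0 < α) (hβ : 0 < β)
    (hg : ContinuousOn g (Icc 0 1)) :
    IntervalIntegrable (fun x => g x * (x ^ (α - 1) * (1 - x) ^ (β - 1)))
      volume 0 1 :=
  (betaJ_integrable_left hα hg).trans (betaJ_integrable_right hβ hg)

lemma integral_rpow_left {α : ℝ} (hα : 0 < α) :
    ∫ x in (0:ℝ)..(1/2), x ^ (α - 1) = (1/2:ℝ) ^ α / α := by
  rw [integral_rpow (Or.inl (by linarith))]
  rw [sub_add_cancel, Real.zero_rpow (ne_of_gt hα)]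
  ring

lemma left_est {g : ℝ → ℝ} {α β L M : ℝ} (hα0 : 0 < α) (hα1 : α ≤ 1)
    (hβ0 : 0 < β) (hβ1 : β ≤ 1)
    (hg : ContinuousOn g (Icc 0 1))
    (hL : ∀ x ∈ Icc (0:ℝ) 1, |g x - g 0| ≤ L * x)
    (hM : ∀ x ∈ Icc (0:ℝ) 1, |g x| ≤ M) :
    |(∫ x in (0:ℝ)..(1/2), g x * (x ^ (α - 1) * (1 - x) ^ (β - 1)))
        - g 0 * ((1/2:ℝ) ^ α / α)| ≤ 2 * (L + M) := by
  have hint1 := betaJ_integrable_left (β := β) hα0 hg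
  have hrint : IntervalIntegrable (fun x : ℝ => x ^ (α - 1)) volume 0 (1/2) :=
    intervalIntegrable_rpow' (by linarith)
  have hint2 : IntervalIntegrable (fun x : ℝ => g 0 * x ^ (α - 1)) volume 0 (1/2) :=
    hrint.const_mul _
  have key : g 0 * ((1/2:ℝ) ^ α / α) = ∫ x in (0:ℝ)..(1/2), g 0 * x ^ (α - 1) := by
    rw [intervalIntegral.integral_const_mul, integral_rpow_left hα0]
  rw [key, ← intervalIntegral.integral_sub hint1 hint2]
  have habs := intervalIntegral.abs_integral_le_integral_abs (μ := volume)
    (f := fun x => g x * (x ^ (α - 1) * (1 - x) ^ (β - 1)) - g 0 * x ^ (α - 1))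
    (by norm_num : (0:ℝ) ≤ 1/2)
  refine habs.trans ?_
  -- pointwise bound
  have hLM : 0 ≤ L + M := by
    have h1 := hL 1 (by norm_num)
    have h2 := hM 0 (by norm_num)
    have := abs_nonneg (g 1 - g 0)
    have := abs_nonneg (g 0)
    nlinarith
  have hpt : ∀ x ∈ Icc (0:ℝ) (1/2),
      |g x * (x ^ (α - 1) * (1 - x) ^ (β - 1)) - g 0 * x ^ (α - 1)|
        ≤ 2 * (L + M) * x ^ α := by
    intro x hx
    obtain ⟨hx0, hx2⟩ := hx
    have hx01 : x ∈ Icc (0:ℝ) 1 := ⟨hx0, by linarith⟩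
    rcases eq_or_lt_of_le hx0 with h0 | h0
    · -- x = 0
      rw [← h0]
      simp [Real.zero_rpow (ne_of_gt hα0), Real.one_rpow]
    · -- 0 < x
      have hc0 : (0:ℝ) < 1 - x := by linarith
      have hc1 : (1:ℝ) - x ≤ 1 := by linarith
      have h1 : (1:ℝ) ≤ (1 - x) ^ (β - 1) :=
        Real.one_le_rpow_of_pos_of_le_one_of_nonpos hc0 hc1 (by linarith)
      have h2 : (1 - x) ^ (β - 1) ≤ (1 - x)⁻¹ := by
        have := Real.rpow_le_rpow_of_exponent_ge hc0 hc1 (by linarith : (-1:ℝ) ≤ β - 1)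
        rwa [Real.rpow_neg_one] at this
      have h3 : (1 - x)⁻¹ ≤ 2 := by
        rw [inv_le_comm₀ hc0 (by norm_num)]; linarith
      have hgx := hL x hx01
      have hg0 := hM 0 (by norm_num)
      have habs0 : (0:ℝ) ≤ |g x - g 0| := abs_nonneg _
      have hinner : |g x * (1 - x) ^ (β - 1) - g 0| ≤ 2 * (L + M) * x := by
        have e : g x * (1 - x) ^ (β - 1) - g 0
            = (g x - g 0) * (1 - x) ^ (β - 1) + g 0 * ((1 - x) ^ (β - 1) - 1) := by ring
        rw [e]
        have t1 : |(g x - g 0) * (1 - x) ^ (β - 1)| ≤ (L * x) * 2 := by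
          rw [abs_mul, abs_of_nonneg (by linarith : (0:ℝ) ≤ (1 - x) ^ (β - 1))]
          nlinarith
        have t4 : (1 - x) ^ (β - 1) - 1 ≤ 2 * x := by
          have : (1 - x)⁻¹ - 1 ≤ 2 * x := by
            rw [inv_eq_one_div, div_sub' (ne_of_gt hc0)]
            rw [div_le_iff₀ hc0]; nlinarith
          linarith
        have t2 : |g 0 * ((1 - x) ^ (β - 1) - 1)| ≤ M * (2 * x) := by
          rw [abs_mul, abs_of_nonneg (by linarith : (0:ℝ) ≤ (1 - x) ^ (β - 1) - 1)]
          have hM0 : 0 ≤ M := le_trans (abs_nonneg _) hg0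
          nlinarith [abs_nonneg (g 0)]
        calc |(g x - g 0) * (1 - x) ^ (β - 1) + g 0 * ((1 - x) ^ (β - 1) - 1)|
            ≤ |(g x - g 0) * (1 - x) ^ (β - 1)| + |g 0 * ((1 - x) ^ (β - 1) - 1)| :=
              abs_add_le _ _
          _ ≤ (L * x) * 2 + M * (2 * x) := add_le_add t1 t2
          _ = 2 * (L + M) * x := by ring
      have e2 : g x * (x ^ (α - 1) * (1 - x) ^ (β - 1)) - g 0 * x ^ (α - 1)
          = x ^ (α - 1) * (g x * (1 - x) ^ (β - 1) - g 0) := by ring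
      rw [e2, abs_mul, abs_of_nonneg (Real.rpow_nonneg hx0 _)]
      calc x ^ (α - 1) * |g x * (1 - x) ^ (β - 1) - g 0|
          ≤ x ^ (α - 1) * (2 * (L + M) * x) := by
            exact mul_le_mul_of_nonneg_left hinner (Real.rpow_nonneg hx0 _)
        _ = 2 * (L + M) * x ^ α := by
            rw [mul_comm (2 * (L + M)) x, ← mul_assoc, ← Real.rpow_add_one (ne_of_gt h0)]
            rw [sub_add_cancel]; ring
  -- integrate the bound
  have hbd : IntervalIntegrable (fun x : ℝ => 2 * (L + M) * x ^ α) volume 0 (1/2) :=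
    (intervalIntegrable_rpow' (by linarith : (-1:ℝ) < α)).const_mul _
  calc (∫ x in (0:ℝ)..(1/2), |g x * (x ^ (α - 1) * (1 - x) ^ (β - 1)) - g 0 * x ^ (α - 1)|)
      ≤ ∫ x in (0:ℝ)..(1/2), 2 * (L + M) * x ^ α := by
        refine intervalIntegral.integral_mono_on (by norm_num) ((hint1.sub hint2).abs) hbd ?_
        exact hpt
    _ = 2 * (L + M) * (((1/2:ℝ) ^ (α + 1)) / (α + 1)) := by
        rw [intervalIntegral.integral_const_mul]
        rw [integral_rpow (Or.inl (by linarith))]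
        rw [Real.zero_rpow (by positivity)]
        ring_nf
    _ ≤ 2 * (L + M) * 1 := by
        have h1 : ((1/2:ℝ) ^ (α + 1)) ≤ 1 :=
          Real.rpow_le_one (by norm_num) (by norm_num) (by linarith)
        have h2 : (1:ℝ) ≤ α + 1 := by linarith
        have : ((1/2:ℝ) ^ (α + 1)) / (α + 1) ≤ 1 := by
          rw [div_le_one (by linarith)]; linarith
        nlinarith
    _ = 2 * (L + M) := mul_one _

lemma cont_comp_one_sub (hg : ContinuousOn g (Icc 0 1)) :
    ContinuousOn (fun x : ℝ => g (1 - x)) (Icc 0 1) := by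
  refine hg.comp (continuousOn_const.sub continuousOn_id) ?_
  intro x hx
  exact ⟨by linarith [hx.2], by linarith [hx.1]⟩

lemma right_est (hα0 : 0 < α) (hα1 : α ≤ 1)
    (hβ0 : 0 < β) (hβ1 : β ≤ 1)
    (hg : ContinuousOn g (Icc 0 1))
    (hL : ∀ x ∈ Icc (0:ℝ) 1, |g x - g 1| ≤ L * (1 - x))
    (hM : ∀ x ∈ Icc (0:ℝ) 1, |g x| ≤ M) :
    |(∫ x in (1/2:ℝ)..1, g x * (x ^ (α - 1) * (1 - x) ^ (β - 1)))
        - g 1 * ((1/2:ℝ) ^ β / β)| ≤ 2 * (L + M) := by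
  have hg' : ContinuousOn (fun x : ℝ => g (1 - x)) (Icc 0 1) := cont_comp_one_sub hg
  have hL' : ∀ x ∈ Icc (0:ℝ) 1, |g (1 - x) - g (1 - 0)| ≤ L * x := by
    intro x hx
    have hx' : (1:ℝ) - x ∈ Icc (0:ℝ) 1 := ⟨by linarith [hx.2], by linarith [hx.1]⟩
    have := hL (1 - x) hx'
    simpa using this
  have hM' : ∀ x ∈ Icc (0:ℝ) 1, |g (1 - x)| ≤ M := by
    intro x hx
    exact hM (1 - x) ⟨by linarith [hx.2], by linarith [hx.1]⟩
  have hle := left_est (g := fun x => g (1 - x)) (α := β) (β := α) (L := L) (M := M)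
    hβ0 hβ1 hα0 hα1 hg' hL' hM'
  have heq : (∫ x in (0:ℝ)..(1/2), g (1 - x) * (x ^ (β - 1) * (1 - x) ^ (α - 1)))
      = ∫ x in (1/2:ℝ)..1, g x * (x ^ (α - 1) * (1 - x) ^ (β - 1)) := by
    have h2 := intervalIntegral.integral_comp_sub_left (a := (0:ℝ)) (b := 1/2)
      (fun x => g x * (x ^ (α - 1) * (1 - x) ^ (β - 1))) 1
    norm_num at h2
    rw [← h2]
    refine intervalIntegral.integral_congr fun x _ => ?_
    ring
  rw [← heq]
  simpa using hle

lemma betaJ_est (hα0 : 0 < α) (hα1 : α ≤ 1) (hβ0 : 0 < β) (hβ1 : β ≤ 1)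
    (hg : ContinuousOn g (Icc 0 1))
    (hL0 : ∀ x ∈ Icc (0:ℝ) 1, |g x - g 0| ≤ L * x)
    (hL1 : ∀ x ∈ Icc (0:ℝ) 1, |g x - g 1| ≤ L * (1 - x))
    (hM : ∀ x ∈ Icc (0:ℝ) 1, |g x| ≤ M) :
    |betaJ g α β - g 0 * ((1/2:ℝ) ^ α / α) - g 1 * ((1/2:ℝ) ^ β / β)| ≤ 4 * (L + M) := by
  have hsplit : betaJ g α β
      = (∫ x in (0:ℝ)..(1/2), g x * (x ^ (α - 1) * (1 - x) ^ (β - 1)))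
        + ∫ x in (1/2:ℝ)..1, g x * (x ^ (α - 1) * (1 - x) ^ (β - 1)) :=
    (intervalIntegral.integral_add_adjacent_intervals
      (betaJ_integrable_left hα0 hg) (betaJ_integrable_right hβ0 hg)).symm
  rw [hsplit]
  have h1 := left_est hα0 hα1 hβ0 hβ1 hg hL0 hM
  have h2 := right_est hα0 hα1 hβ0 hβ1 hg hL1 hM
  calc |(∫ x in (0:ℝ)..(1/2), g x * (x ^ (α - 1) * (1 - x) ^ (β - 1)))
        + (∫ x in (1/2:ℝ)..1, g x * (x ^ (α - 1) * (1 - x) ^ (β - 1)))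
        - g 0 * ((1/2:ℝ) ^ α / α) - g 1 * ((1/2:ℝ) ^ β / β)|
      ≤ |(∫ x in (0:ℝ)..(1/2), g x * (x ^ (α - 1) * (1 - x) ^ (β - 1)))
          - g 0 * ((1/2:ℝ) ^ α / α)|
        + |(∫ x in (1/2:ℝ)..1, g x * (x ^ (α - 1) * (1 - x) ^ (β - 1)))
          - g 1 * ((1/2:ℝ) ^ β / β)| := by
        have := abs_add_le ((∫ x in (0:ℝ)..(1/2), g x * (x ^ (α - 1) * (1 - x) ^ (β - 1)))
            - g 0 * ((1/2:ℝ) ^ α / α))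
          ((∫ x in (1/2:ℝ)..1, g x * (x ^ (α - 1) * (1 - x) ^ (β - 1)))
            - g 1 * ((1/2:ℝ) ^ β / β))
        calc _ = |((∫ x in (0:ℝ)..(1/2), g x * (x ^ (α - 1) * (1 - x) ^ (β - 1)))
            - g 0 * ((1/2:ℝ) ^ α / α))
          + ((∫ x in (1/2:ℝ)..1, g x * (x ^ (α - 1) * (1 - x) ^ (β - 1)))
            - g 1 * ((1/2:ℝ) ^ β / β))| := by congr 1; ring
          _ ≤ _ := this
    _ ≤ 2 * (L + M) + 2 * (L + M) := add_le_add h1 h2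
    _ = 4 * (L + M) := by ring

lemma half_rpow_tendsto {c : ℝ} :
    Tendsto (fun lam : ℝ => (1/2:ℝ) ^ (c * lam)) (nhdsWithin 0 (Set.Ioi 0)) (nhds 1) := by
  have h : Tendsto (fun lam : ℝ => (1/2:ℝ) ^ (c * lam)) (nhds 0) (nhds ((1/2:ℝ) ^ (c * 0))) := by
    apply Tendsto.rpow tendsto_const_nhds (tendsto_const_nhds.mul tendsto_id)
    left; norm_num
  rw [mul_zero, Real.rpow_zero] at h
  exact h.mono_left nhdsWithin_le_nhds

lemma tendsto_lam_betaJ {p q L M : ℝ} {g : ℝ → ℝ} (hp : 0 < p) (hq : 0 < q)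
    (hg : ContinuousOn g (Icc 0 1))
    (hL0 : ∀ x ∈ Icc (0:ℝ) 1, |g x - g 0| ≤ L * x)
    (hL1 : ∀ x ∈ Icc (0:ℝ) 1, |g x - g 1| ≤ L * (1 - x))
    (hM : ∀ x ∈ Icc (0:ℝ) 1, |g x| ≤ M) :
    Tendsto (fun lam => lam * betaJ g (p * lam) (q * lam))
      (nhdsWithin 0 (Set.Ioi 0)) (nhds (g 0 / p + g 1 / q)) := by
  set main : ℝ → ℝ :=
    fun lam => g 0 * ((1/2:ℝ) ^ (p * lam)) / p + g 1 * ((1/2:ℝ) ^ (q * lam)) / q with hmain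
  have hmainlim : Tendsto main (nhdsWithin 0 (Set.Ioi 0)) (nhds (g 0 / p + g 1 / q)) := by
    have h1 : Tendsto (fun lam : ℝ => g 0 * ((1/2:ℝ) ^ (p * lam)) / p)
        (nhdsWithin 0 (Set.Ioi 0)) (nhds (g 0 * 1 / p)) :=
      (half_rpow_tendsto.const_mul (g 0)).div_const p
    have h2 : Tendsto (fun lam : ℝ => g 1 * ((1/2:ℝ) ^ (q * lam)) / q)
        (nhdsWithin 0 (Set.Ioi 0)) (nhds (g 1 * 1 / q)) :=
      (half_rpow_tendsto.const_mul (g 1)).div_const q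
    have := h1.add h2
    rw [hmain, show g 0 / p + g 1 / q = g 0 * 1 / p + g 1 * 1 / q by ring]
    exact this
  have herr : Tendsto (fun lam => lam * betaJ g (p * lam) (q * lam) - main lam)
      (nhdsWithin 0 (Set.Ioi 0)) (nhds 0) := by
    have hbnd : Tendsto (fun lam : ℝ => lam * (4 * (L + M)))
        (nhdsWithin 0 (Set.Ioi 0)) (nhds 0) := by
      have h0 : Tendsto (fun lam : ℝ => lam) (nhdsWithin 0 (Set.Ioi 0)) (nhds 0) :=
        tendsto_id.mono_right nhdsWithin_le_nhds
      simpa using h0.mul_const (4 * (L + M))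
    refine squeeze_zero_norm' ?_ hbnd
    have hmin : (0:ℝ) < min (1/p) (1/q) := by positivity
    filter_upwards [Ioc_mem_nhdsGT_of_mem (Set.mem_Ico.2 ⟨le_refl 0, hmin⟩)] with lam hlam
    obtain ⟨hl0, hl1⟩ := hlam
    have hα0 : 0 < p * lam := by positivity
    have hβ0 : 0 < q * lam := by positivity
    have hα1 : p * lam ≤ 1 := by
      have := le_trans hl1 (min_le_left (1/p) (1/q))
      calc p * lam ≤ p * (1/p) := by nlinarith
        _ = 1 := by field_simp
    have hβ1 : q * lam ≤ 1 := by
      have := le_trans hl1 (min_le_right (1/p) (1/q))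
      calc q * lam ≤ q * (1/q) := by nlinarith
        _ = 1 := by field_simp
    have hest := betaJ_est hα0 hα1 hβ0 hβ1 hg hL0 hL1 hM
    have e : lam * betaJ g (p * lam) (q * lam) - main lam
        = lam * (betaJ g (p * lam) (q * lam)
            - g 0 * ((1/2:ℝ) ^ (p * lam) / (p * lam))
            - g 1 * ((1/2:ℝ) ^ (q * lam) / (q * lam))) := by
      rw [hmain]
      field_simp
      ring
    rw [Real.norm_eq_abs, e, abs_mul, abs_of_pos hl0, mul_comm lam (4 * (L + M)),
      mul_comm lam]
    exact mul_le_mul_of_nonneg_right hest (le_of_lt hl0)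
  have := hmainlim.add herr
  rw [add_zero] at this
  refine this.congr fun lam => ?_
  ring

lemma H_lt {p q : ℝ} (hp : 0 < p) (hq : 0 < q) {x : ℝ} (hx : x ∈ Icc (0:ℝ) 1)
    (hne : x ≠ p / (p + q)) :
    x ^ p * (1 - x) ^ q < (p / (p + q)) ^ p * (1 - p / (p + q)) ^ q := by
  set m := p / (p + q) with hm
  have hpq : 0 < p + q := by linarith
  have hm0 : 0 < m := by positivity
  have hm1 : m < 1 := by
    rw [hm, div_lt_one hpq]; linarith
  have hRpos : 0 < m ^ p * (1 - m) ^ q := by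
    have := Real.rpow_pos_of_pos hm0 p
    have := Real.rpow_pos_of_pos (by linarith : (0:ℝ) < 1 - m) q
    positivity
  obtain ⟨hx0, hx1⟩ := hx
  rcases eq_or_lt_of_le hx0 with h0 | h0
  · rw [← h0, Real.zero_rpow (ne_of_gt hp)]; simpa using hRpos
  rcases eq_or_lt_of_le hx1 with h1 | h1
  · rw [h1]; simp only [sub_self, Real.zero_rpow (ne_of_gt hq)]; simpa using hRpos
  -- interior case
  have h1x : 0 < 1 - x := by linarith
  have h1m : 0 < 1 - m := by linarith
  set u := x / m with hu
  set v := (1 - x) / (1 - m) with hv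
  have hu0 : 0 < u := by positivity
  have hv0 : 0 < v := by positivity
  have huv : u ≠ v := by
    intro h
    apply hne
    rw [hu, hv, div_eq_div_iff (ne_of_gt hm0) (ne_of_gt h1m)] at h
    nlinarith
  have hsum : m * u + (1 - m) * v = 1 := by
    rw [hu, hv]; field_simp; ring
  have hconc := strictConcaveOn_log_Ioi.2 (mem_Ioi.2 hu0) (mem_Ioi.2 hv0) huv
    hm0 (by linarith : (0:ℝ) < 1 - m) (by ring)
  rw [smul_eq_mul, smul_eq_mul, smul_eq_mul, smul_eq_mul, hsum, Real.log_one] at hconc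
  -- hconc : m * log u + (1 - m) * log v < 0
  have hlogu : Real.log u = Real.log x - Real.log m := Real.log_div (ne_of_gt h0) (ne_of_gt hm0)
  have hlogv : Real.log v = Real.log (1 - x) - Real.log (1 - m) :=
    Real.log_div (ne_of_gt h1x) (ne_of_gt h1m)
  rw [hlogu, hlogv] at hconc
  have hkey : p * Real.log x + q * Real.log (1 - x)
      < p * Real.log m + q * Real.log (1 - m) := by
    have hmp : m * (p + q) = p := by rw [hm]; field_simp
    have hmq : (1 - m) * (p + q) = q := by rw [hm]; field_simp; ring
    have h := mul_lt_mul_of_pos_left hconc hpq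
    rw [mul_zero] at h
    have e : (p + q) * (m * (Real.log x - Real.log m)
          + (1 - m) * (Real.log (1 - x) - Real.log (1 - m)))
        = (m * (p + q)) * (Real.log x - Real.log m)
          + ((1 - m) * (p + q)) * (Real.log (1 - x) - Real.log (1 - m)) := by ring
    rw [e, hmp, hmq] at h
    linarith
  rw [Real.rpow_def_of_pos h0, Real.rpow_def_of_pos h1x, Real.rpow_def_of_pos hm0,
    Real.rpow_def_of_pos h1m, ← Real.exp_add, ← Real.exp_add]
  apply Real.exp_lt_exp.2
  nlinarith [hkey]

lemma w_decomp {p q lam lam0 x : ℝ} (hx0 : 0 < x) (hx1 : x < 1) :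
    x ^ (p * lam - 1) * (1 - x) ^ (q * lam - 1)
      = (x ^ p * (1 - x) ^ q) ^ (lam - lam0)
        * (x ^ (p * lam0 - 1) * (1 - x) ^ (q * lam0 - 1)) := by
  have h1 : (0:ℝ) < 1 - x := by linarith
  rw [Real.mul_rpow (Real.rpow_nonneg hx0.le p) (Real.rpow_nonneg h1.le q),
    ← Real.rpow_mul hx0.le, ← Real.rpow_mul h1.le,
    show p * lam - 1 = p * (lam - lam0) + (p * lam0 - 1) by ring,
    Real.rpow_add hx0, show q * lam - 1 = q * (lam - lam0) + (q * lam0 - 1) by ring,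
    Real.rpow_add h1]
  ring

lemma w_bound_far {p q lam lam0 A x : ℝ} (hp : 0 < p) (hq : 0 < q)
    (hl0p : 1 < p * lam0) (hl0q : 1 < q * lam0) (hlam : lam0 ≤ lam)
    (hx : x ∈ Icc (0:ℝ) 1) (hA0 : 0 ≤ A) (hA : x ^ p * (1 - x) ^ q ≤ A) :
    x ^ (p * lam - 1) * (1 - x) ^ (q * lam - 1)
      ≤ A ^ (lam - lam0) * (x ^ (p * lam0 - 1) * (1 - x) ^ (q * lam0 - 1)) := by
  obtain ⟨hx0, hx1⟩ := hx
  have hl0 : 0 < lam0 := by nlinarith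
  have hpl : 0 < p * lam - 1 := by nlinarith [mul_le_mul_of_nonneg_left hlam hp.le]
  have hql : 0 < q * lam - 1 := by nlinarith [mul_le_mul_of_nonneg_left hlam hq.le]
  rcases eq_or_lt_of_le hx0 with h0 | h0
  · rw [← h0, Real.zero_rpow (ne_of_gt hpl)]
    have : (0:ℝ) ≤ A ^ (lam - lam0) * ((0:ℝ) ^ (p * lam0 - 1) * (1 - 0) ^ (q * lam0 - 1)) := by
      have := Real.rpow_nonneg hA0 (lam - lam0)
      have := Real.rpow_nonneg (le_refl (0:ℝ)) (p * lam0 - 1)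
      have := Real.rpow_nonneg (by norm_num : (0:ℝ) ≤ 1 - 0) (q * lam0 - 1)
      positivity
    simpa using this
  rcases eq_or_lt_of_le hx1 with h1 | h1
  · rw [h1]
    simp only [sub_self, Real.zero_rpow (ne_of_gt hql)]
    have : (0:ℝ) ≤ A ^ (lam - lam0) * ((1:ℝ) ^ (p * lam0 - 1) * (0:ℝ) ^ (q * lam0 - 1)) := by
      have := Real.rpow_nonneg hA0 (lam - lam0)
      have := Real.rpow_nonneg (le_refl (0:ℝ)) (q * lam0 - 1)
      positivity
    simpa using this
  · rw [w_decomp (lam0 := lam0) h0 h1]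
    refine mul_le_mul_of_nonneg_right (Real.rpow_le_rpow ?_ hA (sub_nonneg.2 hlam)) ?_
    · have h1x : (0:ℝ) < 1 - x := by linarith
      positivity
    · have h1x : (0:ℝ) < 1 - x := by linarith
      have := Real.rpow_nonneg h0.le (p * lam0 - 1)
      have := Real.rpow_nonneg h1x.le (q * lam0 - 1)
      positivity

lemma w_bound_near {p q lam lam0 B x : ℝ}
    (hlam : lam0 ≤ lam) (hx0 : 0 < x) (hx1 : x < 1) (hB0 : 0 ≤ B)
    (hB : B ≤ x ^ p * (1 - x) ^ q) :
    B ^ (lam - lam0) * (x ^ (p * lam0 - 1) * (1 - x) ^ (q * lam0 - 1))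
      ≤ x ^ (p * lam - 1) * (1 - x) ^ (q * lam - 1) := by
  conv_rhs => rw [w_decomp (lam0 := lam0) hx0 hx1]
  have h1x : (0:ℝ) < 1 - x := by linarith
  refine mul_le_mul_of_nonneg_right (Real.rpow_le_rpow hB0 hB (sub_nonneg.2 hlam)) ?_
  have := Real.rpow_nonneg hx0.le (p * lam0 - 1)
  have := Real.rpow_nonneg h1x.le (q * lam0 - 1)
  positivity

lemma w_cont {p q lam : ℝ} (hpl : 0 ≤ p * lam - 1) (hql : 0 ≤ q * lam - 1) :
    ContinuousOn (fun x : ℝ => x ^ (p * lam - 1) * (1 - x) ^ (q * lam - 1)) (Icc 0 1) :=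
  (continuousOn_id.rpow_const fun _ _ => Or.inr hpl).mul
    ((continuousOn_const.sub continuousOn_id).rpow_const fun _ _ => Or.inr hql)

lemma intervalIntegrable_sub_Icc {f : ℝ → ℝ} {u v : ℝ} (hf : ContinuousOn f (Icc 0 1))
    (h0 : 0 ≤ u) (huv : u ≤ v) (h1 : v ≤ 1) : IntervalIntegrable f volume u v := by
  apply ContinuousOn.intervalIntegrable
  apply hf.mono
  rw [uIcc_of_le huv]
  exact Icc_subset_Icc h0 h1

lemma int_sub_le {f : ℝ → ℝ} {a b : ℝ} (hf : ContinuousOn f (Icc 0 1))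
    (hnn : ∀ x ∈ Icc (0:ℝ) 1, 0 ≤ f x) (h0a : 0 ≤ a) (hab : a ≤ b) (hb1 : b ≤ 1) :
    (∫ x in a..b, f x) ≤ ∫ x in (0:ℝ)..1, f x := by
  have i1 : IntervalIntegrable f volume 0 a :=
    intervalIntegrable_sub_Icc hf le_rfl h0a (by linarith)
  have i2 : IntervalIntegrable f volume a b := intervalIntegrable_sub_Icc hf h0a hab hb1
  have i3 : IntervalIntegrable f volume b 1 :=
    intervalIntegrable_sub_Icc hf (by linarith) hb1 le_rfl
  have e1 : (∫ x in (0:ℝ)..a, f x) + (∫ x in a..b, f x) = ∫ x in (0:ℝ)..b, f x :=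
    intervalIntegral.integral_add_adjacent_intervals i1 i2
  have e2 : (∫ x in (0:ℝ)..b, f x) + (∫ x in b..(1:ℝ), f x) = ∫ x in (0:ℝ)..1, f x :=
    intervalIntegral.integral_add_adjacent_intervals (i1.trans i2) i3
  have n1 : 0 ≤ ∫ x in (0:ℝ)..a, f x :=
    intervalIntegral.integral_nonneg h0a fun x hx => hnn x ⟨hx.1, by linarith [hx.2]⟩
  have n3 : 0 ≤ ∫ x in b..(1:ℝ), f x :=
    intervalIntegral.integral_nonneg hb1 fun x hx => hnn x ⟨by linarith [hx.1], hx.2⟩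
  linarith

set_option maxHeartbeats 1600000 in
lemma tendsto_ratio_top {p q : ℝ} {g : ℝ → ℝ} (hp : 0 < p) (hq : 0 < q)
    (hg : ContinuousOn g (Icc 0 1)) :
    Tendsto (fun lam => (∫ x in (0:ℝ)..1, g x * (x ^ (p * lam - 1) * (1 - x) ^ (q * lam - 1)))
        / ∫ x in (0:ℝ)..1, x ^ (p * lam - 1) * (1 - x) ^ (q * lam - 1))
      atTop (nhds (g (p / (p + q)))) := by
  have hpq : 0 < p + q := by linarith
  set m := p / (p + q) with hm
  have hm0 : 0 < m := by positivity
  have hm1 : m < 1 := by rw [hm, div_lt_one hpq]; linarith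
  have hmIcc : m ∈ Icc (0:ℝ) 1 := ⟨hm0.le, hm1.le⟩
  obtain ⟨M, hM⟩ := isCompact_Icc.exists_bound_of_continuousOn hg
  have hM0 : 0 ≤ M := le_trans (norm_nonneg _) (hM 0 ⟨le_refl 0, zero_le_one⟩)
  rw [Metric.tendsto_atTop]
  intro ε hε
  obtain ⟨δ₀, hδ₀pos, hδ₀⟩ := Metric.continuousWithinAt_iff.1 (hg m hmIcc) (ε/2) (by linarith)
  set δ := min (δ₀/2) (min (m/2) ((1-m)/2)) with hδdef
  have hδpos : 0 < δ := by
    apply lt_min (by linarith)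
    apply lt_min (by linarith) (by linarith)
  have hδδ₀ : δ < δ₀ := lt_of_le_of_lt (min_le_left _ _) (by linarith)
  have hδm : δ ≤ m/2 := le_trans (min_le_right _ _) (min_le_left _ _)
  have hδ1m : δ ≤ (1-m)/2 := le_trans (min_le_right _ _) (min_le_right _ _)
  set H : ℝ → ℝ := fun x => x ^ p * (1 - x) ^ q with hH
  have hHcont : ContinuousOn H (Icc 0 1) :=
    (continuousOn_id.rpow_const fun _ _ => Or.inr hp.le).mul
      ((continuousOn_const.sub continuousOn_id).rpow_const fun _ _ => Or.inr hq.le)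
  set Cs : Set ℝ := Icc (0:ℝ) (m - δ) ∪ Icc (m + δ) 1 with hCs
  have hCsub : Cs ⊆ Icc 0 1 :=
    union_subset (Icc_subset_Icc le_rfl (by linarith)) (Icc_subset_Icc (by linarith) le_rfl)
  have hCcomp : IsCompact Cs := isCompact_Icc.union isCompact_Icc
  have hCne : Cs.Nonempty := ⟨0, Or.inl ⟨le_refl 0, by linarith⟩⟩
  obtain ⟨x₀, hx₀C, hx₀max⟩ := hCcomp.exists_isMaxOn hCne (hHcont.mono hCsub)
  set A := H x₀ with hA
  have hx₀ne : x₀ ≠ m := by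
    rcases hx₀C with h | h
    · intro he; rw [he] at h; linarith [h.2]
    · intro he; rw [he] at h; linarith [h.1]
  have hAlt : A < H m := H_lt hp hq (hCsub hx₀C) hx₀ne
  have hA0 : 0 ≤ A := by
    have h1 := Real.rpow_nonneg (hCsub hx₀C).1 p
    have h2 := Real.rpow_nonneg (by linarith [(hCsub hx₀C).2] : (0:ℝ) ≤ 1 - x₀) q
    exact mul_nonneg h1 h2
  set B := (A + H m)/2 with hB
  have hAB : A < B := by rw [hB]; linarith
  have hBH : B < H m := by rw [hB]; linarith
  have hB0 : 0 < B := by rw [hB]; linarith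
  -- near interval
  have hHm : ContinuousAt H m := by
    apply ContinuousAt.mul
    · exact Real.continuousAt_rpow_const m p (Or.inl (ne_of_gt hm0))
    · exact (Real.continuousAt_rpow_const (1-m) q
        (Or.inl (ne_of_gt (by linarith)))).comp (continuousAt_const.sub continuousAt_id)
  have hev : ∀ᶠ x in nhds m, B < H x := hHm.eventually (eventually_gt_nhds hBH)
  obtain ⟨η₀, hη₀pos, hη₀⟩ := Metric.eventually_nhds_iff.1 hev
  set η := min (η₀/2) δ with hηdef
  have hηpos : 0 < η := lt_min (by linarith) hδpos
  have hηδ : η ≤ δ := min_le_right _ _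
  have hηη₀ : η < η₀ := lt_of_le_of_lt (min_le_left _ _) (by linarith)
  have hmη0 : 0 < m - η := by linarith
  have hmη1 : m + η < 1 := by linarith
  -- lam0
  set lam0 := max (2/p) (2/q) with hlam0def
  have hl0p : 1 < p * lam0 := by
    have h1 : 2/p ≤ lam0 := le_max_left _ _
    have := mul_le_mul_of_nonneg_left h1 hp.le
    rw [mul_div_cancel₀ 2 (ne_of_gt hp)] at this  -- p * (2/p) = 2?
    linarith
  have hl0q : 1 < q * lam0 := by
    have h1 : 2/q ≤ lam0 := le_max_right _ _
    have := mul_le_mul_of_nonneg_left h1 hq.le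
    rw [mul_div_cancel₀ 2 (ne_of_gt hq)] at this
    linarith
  set w0 : ℝ → ℝ := fun x => x ^ (p * lam0 - 1) * (1 - x) ^ (q * lam0 - 1) with hw0
  have hw0cont : ContinuousOn w0 (Icc 0 1) := w_cont (by linarith) (by linarith)
  have hw0nn : ∀ x ∈ Icc (0:ℝ) 1, 0 ≤ w0 x := by
    intro x hx
    exact mul_nonneg (Real.rpow_nonneg hx.1 _)
      (Real.rpow_nonneg (by linarith [hx.2] : (0:ℝ) ≤ 1 - x) _)
  set CL := ∫ x in (0:ℝ)..(m - δ), w0 x with hCL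
  set CR := ∫ x in (m + δ)..(1:ℝ), w0 x with hCR
  have hCL0 : 0 ≤ CL :=
    intervalIntegral.integral_nonneg (by linarith) fun x hx =>
      hw0nn x ⟨hx.1, by linarith [hx.2]⟩
  have hCR0 : 0 ≤ CR :=
    intervalIntegral.integral_nonneg (by linarith) fun x hx =>
      hw0nn x ⟨by linarith [hx.1], hx.2⟩
  set c1 := ∫ x in (m - η)..(m + η), w0 x with hc1def
  have hc1 : 0 < c1 := by
    apply intervalIntegral.intervalIntegral_pos_of_pos_on
    · exact intervalIntegrable_sub_Icc hw0cont (by linarith) (by linarith) (by linarith)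
    · intro x hx
      have hx0 : 0 < x := by linarith [hx.1]
      have hx1 : x < 1 := by linarith [hx.2]
      exact mul_pos (Real.rpow_pos_of_pos hx0 _)
        (Real.rpow_pos_of_pos (by linarith : (0:ℝ) < 1 - x) _)
    · linarith
  -- tail tendsto
  have hAB1 : A / B < 1 := (div_lt_one hB0).2 hAB
  have hABnn : 0 ≤ A / B := div_nonneg hA0 hB0.le
  have htail : Tendsto (fun lam : ℝ => (2*M*(CL+CR)/c1) * (A/B) ^ (lam - lam0))
      atTop (nhds 0) := by
    have hbase : Tendsto (fun t : ℝ => (A/B) ^ t) atTop (nhds 0) :=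
      tendsto_rpow_atTop_of_base_lt_one _ (by linarith) hAB1
    have hsub : Tendsto (fun lam : ℝ => lam - lam0) atTop atTop :=
      tendsto_atTop_add_const_right atTop (-lam0) tendsto_id
    have := (hbase.comp hsub).const_mul (2*M*(CL+CR)/c1)
    simpa using this
  obtain ⟨N₀, hN₀⟩ := (Metric.tendsto_atTop.1 htail) (ε/2) (by linarith)
  refine ⟨max N₀ lam0, fun lam hlam => ?_⟩
  have hlamN₀ : N₀ ≤ lam := le_trans (le_max_left _ _) hlam
  have hlam0 : lam0 ≤ lam := le_trans (le_max_right _ _) hlam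
  have hpl : 0 ≤ p * lam - 1 := by nlinarith [mul_le_mul_of_nonneg_left hlam0 hp.le]
  have hql : 0 ≤ q * lam - 1 := by nlinarith [mul_le_mul_of_nonneg_left hlam0 hq.le]
  set w : ℝ → ℝ := fun x => x ^ (p * lam - 1) * (1 - x) ^ (q * lam - 1) with hw
  have hwcont : ContinuousOn w (Icc 0 1) := w_cont hpl hql
  have hwnn : ∀ x ∈ Icc (0:ℝ) 1, 0 ≤ w x := by
    intro x hx
    exact mul_nonneg (Real.rpow_nonneg hx.1 _)
      (Real.rpow_nonneg (by linarith [hx.2] : (0:ℝ) ≤ 1 - x) _)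
  set I1 := ∫ x in (0:ℝ)..1, w x with hI1
  set Ig := ∫ x in (0:ℝ)..1, g x * w x with hIg
  -- lower bound for I1
  have key1 : B ^ (lam - lam0) * c1 ≤ I1 := by
    have e1 : B ^ (lam - lam0) * c1
        = ∫ x in (m - η)..(m + η), B ^ (lam - lam0) * w0 x := by
      rw [hc1def, intervalIntegral.integral_const_mul]
    rw [e1]
    have step1 : (∫ x in (m - η)..(m + η), B ^ (lam - lam0) * w0 x)
        ≤ ∫ x in (m - η)..(m + η), w x := by
      apply intervalIntegral.integral_mono_on (by linarith)
      · exact (intervalIntegrable_sub_Icc hw0cont (by linarith) (by linarith)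
          (by linarith)).const_mul _
      · exact intervalIntegrable_sub_Icc hwcont (by linarith) (by linarith) (by linarith)
      · intro x hx
        have hx0 : 0 < x := by linarith [hx.1]
        have hx1 : x < 1 := by linarith [hx.2]
        have hdist : dist x m < η₀ := by
          rw [Real.dist_eq, abs_lt]
          constructor <;> [linarith [hx.1]; linarith [hx.2]]
        exact w_bound_near hlam0 hx0 hx1 hB0.le (le_of_lt (hη₀ hdist))
    refine le_trans step1 (int_sub_le hwcont hwnn (by linarith) (by linarith) (by linarith))
  have hI1pos : 0 < I1 := by
    have : 0 < B ^ (lam - lam0) * c1 := mul_pos (Real.rpow_pos_of_pos hB0 _) hc1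
    linarith
  -- difference bound
  have hgw : ContinuousOn (fun x => g x * w x) (Icc 0 1) := hg.mul hwcont
  have hdiffc : ContinuousOn (fun x => (g x - g m) * w x) (Icc 0 1) :=
    (hg.sub continuousOn_const).mul hwcont
  have keyeq : Ig - g m * I1 = ∫ x in (0:ℝ)..1, (g x - g m) * w x := by
    rw [hIg, hI1, ← intervalIntegral.integral_const_mul,
      ← intervalIntegral.integral_sub
        (intervalIntegrable_sub_Icc hgw le_rfl zero_le_one le_rfl)
        ((intervalIntegrable_sub_Icc hwcont le_rfl zero_le_one le_rfl).const_mul _)]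
    congr 1
    funext x
    ring
  have hsplit : (∫ x in (0:ℝ)..1, (g x - g m) * w x)
      = (∫ x in (0:ℝ)..(m - δ), (g x - g m) * w x)
        + (∫ x in (m - δ)..(m + δ), (g x - g m) * w x)
        + ∫ x in (m + δ)..(1:ℝ), (g x - g m) * w x := by
    have i1 := intervalIntegrable_sub_Icc hdiffc le_rfl (by linarith : (0:ℝ) ≤ m - δ)
      (by linarith)
    have i2 := intervalIntegrable_sub_Icc hdiffc (by linarith : (0:ℝ) ≤ m - δ)
      (by linarith : m - δ ≤ m + δ) (by linarith)
    have i3 := intervalIntegrable_sub_Icc hdiffc (by linarith : (0:ℝ) ≤ m + δ)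
      (by linarith) le_rfl
    rw [intervalIntegral.integral_add_adjacent_intervals i1 i2,
      intervalIntegral.integral_add_adjacent_intervals (i1.trans i2) i3]
  -- far piece bounds
  have hfarL : |∫ x in (0:ℝ)..(m - δ), (g x - g m) * w x|
      ≤ 2*M * A ^ (lam - lam0) * CL := by
    refine le_trans (intervalIntegral.abs_integral_le_integral_abs (by linarith)) ?_
    have e : 2*M * A ^ (lam - lam0) * CL
        = ∫ x in (0:ℝ)..(m - δ), 2*M * A ^ (lam - lam0) * w0 x := by
      rw [hCL, intervalIntegral.integral_const_mul]
    rw [e]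
    apply intervalIntegral.integral_mono_on (by linarith)
    · exact ((intervalIntegrable_sub_Icc hdiffc le_rfl (by linarith) (by linarith)).abs)
    · exact (intervalIntegrable_sub_Icc hw0cont le_rfl (by linarith) (by linarith)).const_mul _
    · intro x hx
      have hxIcc : x ∈ Icc (0:ℝ) 1 := ⟨hx.1, by linarith [hx.2]⟩
      have hgb : |g x - g m| ≤ 2*M := by
        have h1 := hM x hxIcc
        have h2 := hM m hmIcc
        rw [Real.norm_eq_abs] at h1 h2
        calc |g x - g m| ≤ |g x| + |g m| := abs_sub _ _
          _ ≤ 2*M := by linarith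
      have hHA : H x ≤ A := hx₀max (Or.inl ⟨hx.1, hx.2⟩)
      have hwb : w x ≤ A ^ (lam - lam0) * w0 x :=
        w_bound_far hp hq hl0p hl0q hlam0 hxIcc hA0 hHA
      rw [abs_mul, abs_of_nonneg (hwnn x hxIcc)]
      calc |g x - g m| * w x ≤ 2*M * (A ^ (lam - lam0) * w0 x) := by
            apply mul_le_mul hgb hwb (hwnn x hxIcc) (by linarith)
        _ = 2*M * A ^ (lam - lam0) * w0 x := by ring
  have hfarR : |∫ x in (m + δ)..(1:ℝ), (g x - g m) * w x|
      ≤ 2*M * A ^ (lam - lam0) * CR := by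
    refine le_trans (intervalIntegral.abs_integral_le_integral_abs (by linarith)) ?_
    have e : 2*M * A ^ (lam - lam0) * CR
        = ∫ x in (m + δ)..(1:ℝ), 2*M * A ^ (lam - lam0) * w0 x := by
      rw [hCR, intervalIntegral.integral_const_mul]
    rw [e]
    apply intervalIntegral.integral_mono_on (by linarith)
    · exact ((intervalIntegrable_sub_Icc hdiffc (by linarith) (by linarith) le_rfl).abs)
    · exact (intervalIntegrable_sub_Icc hw0cont (by linarith) (by linarith) le_rfl).const_mul _
    · intro x hx
      have hxIcc : x ∈ Icc (0:ℝ) 1 := ⟨by linarith [hx.1], hx.2⟩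
      have hgb : |g x - g m| ≤ 2*M := by
        have h1 := hM x hxIcc
        have h2 := hM m hmIcc
        rw [Real.norm_eq_abs] at h1 h2
        calc |g x - g m| ≤ |g x| + |g m| := abs_sub _ _
          _ ≤ 2*M := by linarith
      have hHA : H x ≤ A := hx₀max (Or.inr ⟨hx.1, hx.2⟩)
      have hwb : w x ≤ A ^ (lam - lam0) * w0 x :=
        w_bound_far hp hq hl0p hl0q hlam0 hxIcc hA0 hHA
      rw [abs_mul, abs_of_nonneg (hwnn x hxIcc)]
      calc |g x - g m| * w x ≤ 2*M * (A ^ (lam - lam0) * w0 x) := by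
            apply mul_le_mul hgb hwb (hwnn x hxIcc) (by linarith)
        _ = 2*M * A ^ (lam - lam0) * w0 x := by ring
  have hmid : |∫ x in (m - δ)..(m + δ), (g x - g m) * w x| ≤ (ε/2) * I1 := by
    refine le_trans (intervalIntegral.abs_integral_le_integral_abs (by linarith)) ?_
    have step1 : (∫ x in (m - δ)..(m + δ), |(g x - g m) * w x|)
        ≤ ∫ x in (m - δ)..(m + δ), (ε/2) * w x := by
      apply intervalIntegral.integral_mono_on (by linarith)
      · exact (intervalIntegrable_sub_Icc hdiffc (by linarith) (by linarith) (by linarith)).abs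
      · exact (intervalIntegrable_sub_Icc hwcont (by linarith) (by linarith)
          (by linarith)).const_mul _
      · intro x hx
        have hxIcc : x ∈ Icc (0:ℝ) 1 := ⟨by linarith [hx.1], by linarith [hx.2]⟩
        have hdist : dist x m < δ₀ := by
          rw [Real.dist_eq, abs_lt]
          constructor <;> [linarith [hx.1]; linarith [hx.2]]
        have hgb : |g x - g m| ≤ ε/2 := by
          have := hδ₀ hxIcc hdist
          rw [Real.dist_eq] at this
          linarith
        rw [abs_mul, abs_of_nonneg (hwnn x hxIcc)]
        exact mul_le_mul_of_nonneg_right hgb (hwnn x hxIcc)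
    refine le_trans step1 ?_
    rw [intervalIntegral.integral_const_mul]
    apply mul_le_mul_of_nonneg_left _ (by linarith)
    exact int_sub_le hwcont hwnn (by linarith) (by linarith) (by linarith)
  -- combine
  have key2 : |Ig - g m * I1| ≤ (ε/2) * I1 + 2*M*(CL+CR) * A ^ (lam - lam0) := by
    rw [keyeq, hsplit]
    calc |(∫ x in (0:ℝ)..(m - δ), (g x - g m) * w x)
          + (∫ x in (m - δ)..(m + δ), (g x - g m) * w x)
          + ∫ x in (m + δ)..(1:ℝ), (g x - g m) * w x|
        ≤ |(∫ x in (0:ℝ)..(m - δ), (g x - g m) * w x)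
            + (∫ x in (m - δ)..(m + δ), (g x - g m) * w x)|
          + |∫ x in (m + δ)..(1:ℝ), (g x - g m) * w x| := abs_add_le _ _
      _ ≤ |∫ x in (0:ℝ)..(m - δ), (g x - g m) * w x|
          + |∫ x in (m - δ)..(m + δ), (g x - g m) * w x|
          + |∫ x in (m + δ)..(1:ℝ), (g x - g m) * w x| := by
            have := abs_add_le (∫ x in (0:ℝ)..(m - δ), (g x - g m) * w x)
              (∫ x in (m - δ)..(m + δ), (g x - g m) * w x)
            linarith
      _ ≤ 2*M * A ^ (lam - lam0) * CL + (ε/2) * I1 + 2*M * A ^ (lam - lam0) * CR := by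
            linarith
      _ = (ε/2) * I1 + 2*M*(CL+CR) * A ^ (lam - lam0) := by ring
  have hdistfin : dist (Ig / I1) (g m) < ε := by
    rw [Real.dist_eq]
    have e : Ig / I1 - g m = (Ig - g m * I1) / I1 := by
      field_simp
    rw [e, abs_div, abs_of_pos hI1pos]
    have htl : 2*M*(CL+CR) * A ^ (lam - lam0) / I1
        ≤ (2*M*(CL+CR)/c1) * (A/B) ^ (lam - lam0) := by
      have hnum : 0 ≤ 2*M*(CL+CR) * A ^ (lam - lam0) := by
        have := Real.rpow_nonneg hA0 (lam - lam0)
        positivity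
      have h1 : 2*M*(CL+CR) * A ^ (lam - lam0) / I1
          ≤ 2*M*(CL+CR) * A ^ (lam - lam0) / (B ^ (lam - lam0) * c1) := by
        apply div_le_div_of_nonneg_left hnum (mul_pos (Real.rpow_pos_of_pos hB0 _) hc1) key1
      refine le_trans h1 (le_of_eq ?_)
      rw [Real.div_rpow hA0 hB0.le]
      rw [div_mul_div_comm, mul_comm c1 (B ^ (lam - lam0))]
    have hTlt : (2*M*(CL+CR)/c1) * (A/B) ^ (lam - lam0) < ε/2 := by
      have := hN₀ lam hlamN₀
      rw [Real.dist_eq, sub_zero] at this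
      exact lt_of_le_of_lt (le_abs_self _) this
    calc |Ig - g m * I1| / I1
        ≤ ((ε/2) * I1 + 2*M*(CL+CR) * A ^ (lam - lam0)) / I1 := by gcongr
      _ = ε/2 + 2*M*(CL+CR) * A ^ (lam - lam0) / I1 := by
          rw [add_div, mul_div_assoc, div_self (ne_of_gt hI1pos), mul_one]
      _ ≤ ε/2 + (2*M*(CL+CR)/c1) * (A/B) ^ (lam - lam0) := by linarith
      _ < ε/2 + ε/2 := by linarith
      _ = ε := by ring
  exact hdistfin

lemma monod_nonneg {a b R : ℝ} (ha : 0 < a) (hb : 0 < b) (hR : 0 ≤ R) :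
    0 ≤ monod a b R := by
  unfold monod; positivity

lemma monod_le {a b R : ℝ} (ha : 0 < a) (hb : 0 < b) (hR : 0 ≤ R) :
    monod a b R ≤ a := by
  unfold monod
  rw [div_le_iff₀ (by linarith)]
  nlinarith

lemma monod_diff {a b u v : ℝ} (ha : 0 < a) (hb : 0 < b) (hu : 0 ≤ u) (hv : 0 ≤ v) :
    |monod a b u - monod a b v| ≤ (a / b) * |u - v| := by
  have hbu : (0:ℝ) < b + u := by linarith
  have hbv : (0:ℝ) < b + v := by linarith
  have hden : (0:ℝ) < (b + u) * (b + v) := mul_pos hbu hbv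
  have key : monod a b u - monod a b v = a * b * (u - v) / ((b + u) * (b + v)) := by
    unfold monod
    field_simp
    ring
  rw [key, abs_div, abs_of_pos hden, abs_mul, abs_mul, abs_of_pos ha, abs_of_pos hb,
    div_le_iff₀ hden]
  have hb2 : b * b ≤ (b + u) * (b + v) := by nlinarith
  have he : a * b * |u - v| = a / b * |u - v| * (b * b) := by field_simp
  rw [he]
  exact mul_le_mul_of_nonneg_left hb2 (by positivity)

lemma Phi_contOn {a1 b1 a2 b2 δ1 δ2 R01 R02 : ℝ}
    (hb1 : 0 < b1) (hb2 : 0 < b2) (hR01 : 0 < R01) (hR : R01 < R02) :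
    ContinuousOn (Phi a1 b1 a2 b2 δ1 δ2 R01 R02) (Icc 0 1) := by
  have hrpos : ∀ x ∈ Icc (0:ℝ) 1, 0 < (R02 - R01) * x + R01 := by
    intro x hx
    nlinarith [hx.1, hx.2]
  have hrc : Continuous fun x : ℝ => (R02 - R01) * x + R01 := by continuity
  have hmc : ∀ (a b : ℝ), 0 < b → ContinuousOn
      (fun x : ℝ => monod a b ((R02 - R01) * x + R01)) (Icc 0 1) := by
    intro a b hbpos
    unfold monod
    apply ContinuousOn.div
    · exact (continuous_const.mul hrc).continuousOn
    · exact (continuous_const.add hrc).continuousOn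
    · intro x hx
      have := hrpos x hx
      positivity
  unfold Phi
  exact ((continuousOn_const.mul (continuousOn_const.sub continuousOn_id)).mul
      ((hmc a1 b1 hb1).sub continuousOn_const)).add
    ((continuousOn_const.mul continuousOn_id).mul
      ((hmc a2 b2 hb2).sub continuousOn_const))

lemma abs3 (A B C : ℝ) : |A - B + C| ≤ |A| + |B| + |C| := by
  calc |A - B + C| ≤ |A - B| + |C| := abs_add_le _ _
    _ ≤ |A| + |B| + |C| := by have := abs_sub A B; linarith

lemma abs3' (A B C : ℝ) : |A + B - C| ≤ |A| + |B| + |C| := by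
  have h1 := abs_sub (A + B) C
  have h2 := abs_add_le A B
  linarith

set_option maxHeartbeats 2000000 in
lemma Phi_lip {a1 b1 a2 b2 δ1 δ2 R01 R02 : ℝ}
    (ha1 : 0 < a1) (hb1 : 0 < b1) (ha2 : 0 < a2) (hb2 : 0 < b2)
    (hδ1 : 0 < δ1) (hδ2 : 0 < δ2) (hR01 : 0 < R01) (hR : R01 < R02) :
    ∃ L : ℝ, ∀ x ∈ Icc (0:ℝ) 1,
      |Phi a1 b1 a2 b2 δ1 δ2 R01 R02 x - Phi a1 b1 a2 b2 δ1 δ2 R01 R02 0| ≤ L * x ∧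
      |Phi a1 b1 a2 b2 δ1 δ2 R01 R02 x - Phi a1 b1 a2 b2 δ1 δ2 R01 R02 1| ≤ L * (1 - x) := by
  have hR' : (0:ℝ) < R02 - R01 := by linarith
  set K1 : ℝ := a1 / b1 * (R02 - R01) with hK1
  set K2 : ℝ := a2 / b2 * (R02 - R01) with hK2
  have hK1p : 0 < K1 := by rw [hK1]; positivity
  have hK2p : 0 < K2 := by rw [hK2]; positivity
  refine ⟨δ2 * (a1 + δ1) + δ1 * (a2 + δ2) + δ2 * K1 + δ1 * K2, fun x hx => ?_⟩
  obtain ⟨hx0, hx1⟩ := hx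
  have hr : ∀ t : ℝ, 0 ≤ t → t ≤ 1 → 0 ≤ (R02 - R01) * t + R01 := by
    intro t h1 h2; nlinarith
  have hrx := hr x hx0 hx1
  have hr0 := hr 0 le_rfl zero_le_one
  have hr1 := hr 1 zero_le_one le_rfl
  set F1x := monod a1 b1 ((R02 - R01) * x + R01) with hF1x
  set F10 := monod a1 b1 ((R02 - R01) * 0 + R01) with hF10
  set F2x := monod a2 b2 ((R02 - R01) * x + R01) with hF2x
  set F21 := monod a2 b2 ((R02 - R01) * 1 + R01) with hF21
  have hF1x0 := monod_nonneg ha1 hb1 hrx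
  have hF1xa := monod_le ha1 hb1 hrx
  have hF10_0 := monod_nonneg ha1 hb1 hr0
  have hF10_a := monod_le ha1 hb1 hr0
  have hF2x0 := monod_nonneg ha2 hb2 hrx
  have hF2xa := monod_le ha2 hb2 hrx
  have hF21_0 := monod_nonneg ha2 hb2 hr1
  have hF21_a := monod_le ha2 hb2 hr1
  have hd1 : |F1x - F10| ≤ K1 * x := by
    have h := monod_diff ha1 hb1 hrx hr0
    have he : |((R02 - R01) * x + R01) - ((R02 - R01) * 0 + R01)| = (R02 - R01) * x := by
      rw [show ((R02 - R01) * x + R01) - ((R02 - R01) * 0 + R01) = (R02 - R01) * x by ring]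
      exact abs_of_nonneg (by nlinarith)
    rw [he] at h
    calc |F1x - F10| ≤ a1 / b1 * ((R02 - R01) * x) := h
      _ = K1 * x := by rw [hK1]; ring
  have hd2 : |F2x - F21| ≤ K2 * (1 - x) := by
    have h := monod_diff ha2 hb2 hrx hr1
    have he : |((R02 - R01) * x + R01) - ((R02 - R01) * 1 + R01)| = (R02 - R01) * (1 - x) := by
      rw [show ((R02 - R01) * x + R01) - ((R02 - R01) * 1 + R01) = -((R02 - R01) * (1 - x))
        by ring, abs_neg]
      exact abs_of_nonneg (by nlinarith)
    rw [he] at h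
    calc |F2x - F21| ≤ a2 / b2 * ((R02 - R01) * (1 - x)) := h
      _ = K2 * (1 - x) := by rw [hK2]; ring
  constructor
  · have e0 : Phi a1 b1 a2 b2 δ1 δ2 R01 R02 x - Phi a1 b1 a2 b2 δ1 δ2 R01 R02 0
        = δ2 * (1 - x) * (F1x - F10) - δ2 * x * (F10 - δ1) + δ1 * x * (F2x - δ2) := by
      simp only [Phi, hF1x, hF10, hF2x]; ring
    rw [e0]
    refine le_trans (abs3 _ _ _) ?_
    have t1 : |δ2 * (1 - x) * (F1x - F10)| ≤ δ2 * K1 * x := by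
      rw [abs_mul, abs_of_nonneg (by nlinarith : (0:ℝ) ≤ δ2 * (1 - x))]
      calc δ2 * (1 - x) * |F1x - F10| ≤ δ2 * 1 * (K1 * x) :=
            mul_le_mul (by nlinarith) hd1 (abs_nonneg _) (by positivity)
        _ = δ2 * K1 * x := by ring
    have t2 : |δ2 * x * (F10 - δ1)| ≤ δ2 * (a1 + δ1) * x := by
      rw [abs_mul, abs_of_nonneg (by positivity : (0:ℝ) ≤ δ2 * x)]
      have hb : |F10 - δ1| ≤ a1 + δ1 := by rw [abs_le]; constructor <;> nlinarith
      calc δ2 * x * |F10 - δ1| ≤ δ2 * x * (a1 + δ1) :=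
            mul_le_mul_of_nonneg_left hb (by positivity)
        _ = δ2 * (a1 + δ1) * x := by ring
    have t3 : |δ1 * x * (F2x - δ2)| ≤ δ1 * (a2 + δ2) * x := by
      rw [abs_mul, abs_of_nonneg (by positivity : (0:ℝ) ≤ δ1 * x)]
      have hb : |F2x - δ2| ≤ a2 + δ2 := by rw [abs_le]; constructor <;> nlinarith
      calc δ1 * x * |F2x - δ2| ≤ δ1 * x * (a2 + δ2) :=
            mul_le_mul_of_nonneg_left hb (by positivity)
        _ = δ1 * (a2 + δ2) * x := by ring
    have hsum : δ2 * K1 * x + δ2 * (a1 + δ1) * x + δ1 * (a2 + δ2) * x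
        ≤ (δ2 * (a1 + δ1) + δ1 * (a2 + δ2) + δ2 * K1 + δ1 * K2) * x := by
      nlinarith [mul_nonneg (mul_nonneg hδ1.le hK2p.le) hx0]
    linarith [t1, t2, t3, hsum]
  · have e1 : Phi a1 b1 a2 b2 δ1 δ2 R01 R02 x - Phi a1 b1 a2 b2 δ1 δ2 R01 R02 1
        = δ2 * (1 - x) * (F1x - δ1) + δ1 * x * (F2x - F21)
          - δ1 * (1 - x) * (F21 - δ2) := by
      simp only [Phi, hF1x, hF2x, hF21]; ring
    rw [e1]
    refine le_trans (abs3' _ _ _) ?_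
    have t1 : |δ2 * (1 - x) * (F1x - δ1)| ≤ δ2 * (a1 + δ1) * (1 - x) := by
      rw [abs_mul, abs_of_nonneg (by nlinarith : (0:ℝ) ≤ δ2 * (1 - x))]
      have hb : |F1x - δ1| ≤ a1 + δ1 := by rw [abs_le]; constructor <;> nlinarith
      calc δ2 * (1 - x) * |F1x - δ1| ≤ δ2 * (1 - x) * (a1 + δ1) :=
            mul_le_mul_of_nonneg_left hb (by nlinarith)
        _ = δ2 * (a1 + δ1) * (1 - x) := by ring
    have t2 : |δ1 * x * (F2x - F21)| ≤ δ1 * K2 * (1 - x) := by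
      rw [abs_mul, abs_of_nonneg (by positivity : (0:ℝ) ≤ δ1 * x)]
      calc δ1 * x * |F2x - F21| ≤ δ1 * 1 * (K2 * (1 - x)) :=
            mul_le_mul (by nlinarith) hd2 (abs_nonneg _) (by positivity)
        _ = δ1 * K2 * (1 - x) := by ring
    have t3 : |δ1 * (1 - x) * (F21 - δ2)| ≤ δ1 * (a2 + δ2) * (1 - x) := by
      rw [abs_mul, abs_of_nonneg (by nlinarith : (0:ℝ) ≤ δ1 * (1 - x))]
      have hb : |F21 - δ2| ≤ a2 + δ2 := by rw [abs_le]; constructor <;> nlinarith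
      calc δ1 * (1 - x) * |F21 - δ2| ≤ δ1 * (1 - x) * (a2 + δ2) :=
            mul_le_mul_of_nonneg_left hb (by nlinarith)
        _ = δ1 * (a2 + δ2) * (1 - x) := by ring
    have hsum : δ2 * (a1 + δ1) * (1 - x) + δ1 * K2 * (1 - x) + δ1 * (a2 + δ2) * (1 - x)
        ≤ (δ2 * (a1 + δ1) + δ1 * (a2 + δ2) + δ2 * K1 + δ1 * K2) * (1 - x) := by
      nlinarith [mul_nonneg (mul_nonneg hδ2.le hK1p.le) (by linarith : (0:ℝ) ≤ 1 - x)]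
    linarith [t1, t2, t3, hsum]

lemma tendsto_ratio_zero {p q L M : ℝ} {g : ℝ → ℝ} (hp : 0 < p) (hq : 0 < q)
    (hg : ContinuousOn g (Icc 0 1))
    (hL0 : ∀ x ∈ Icc (0:ℝ) 1, |g x - g 0| ≤ L * x)
    (hL1 : ∀ x ∈ Icc (0:ℝ) 1, |g x - g 1| ≤ L * (1 - x))
    (hM : ∀ x ∈ Icc (0:ℝ) 1, |g x| ≤ M) :
    Tendsto (fun lam => (∫ x in (0:ℝ)..1, g x * (x ^ (p * lam - 1) * (1 - x) ^ (q * lam - 1)))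
        / ∫ x in (0:ℝ)..1, x ^ (p * lam - 1) * (1 - x) ^ (q * lam - 1))
      (nhdsWithin 0 (Set.Ioi 0)) (nhds ((q * g 0 + p * g 1) / (p + q))) := by
  have hone : Tendsto (fun lam => lam * betaJ (fun _ => (1:ℝ)) (p * lam) (q * lam))
      (nhdsWithin 0 (Set.Ioi 0)) (nhds ((1:ℝ) / p + 1 / q)) := by
    have h := tendsto_lam_betaJ (g := fun _ => (1:ℝ)) (L := 0) (M := 1) hp hq
      continuousOn_const (fun x _ => by simp) (fun x _ => by simp) (fun x _ => by simp)
    simpa using h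
  have hglim := tendsto_lam_betaJ hp hq hg hL0 hL1 hM
  have hne : (1:ℝ) / p + 1 / q ≠ 0 := by positivity
  have hdiv := hglim.div hone hne
  have hv : (g 0 / p + g 1 / q) / ((1:ℝ) / p + 1 / q) = (q * g 0 + p * g 1) / (p + q) := by
    rw [div_eq_div_iff (by positivity) (by positivity)]
    field_simp
    ring
  rw [← hv]
  refine hdiv.congr' ?_
  filter_upwards [self_mem_nhdsWithin] with lam hlam
  have hlam0 : lam ≠ 0 := ne_of_gt hlam
  have hden : betaJ (fun _ => (1:ℝ)) (p * lam) (q * lam)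
      = ∫ x in (0:ℝ)..1, x ^ (p * lam - 1) * (1 - x) ^ (q * lam - 1) :=
    intervalIntegral.integral_congr fun x _ => one_mul _
  simp only [Pi.div_apply]
  rw [mul_div_mul_left _ _ hlam0, hden]
  rfl

end Aux

open Set Real in
theorem stmt13 (a1 b1 a2 b2 δ1 δ2 R01 R02 s : ℝ)
    (ha1 : 0 < a1) (hb1 : 0 < b1) (ha2 : 0 < a2) (hb2 : 0 < b2)
    (hδ1 : 0 < δ1) (hδ2 : 0 < δ2)
    (hR01 : 0 < R01) (hR : R01 < R02) (hs0 : 0 < s) (hs1 : s < 1) :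
    Tendsto (invasionRate0 a1 b1 a2 b2 δ1 δ2 R01 R02 s) atTop (nhds
      ((1 - s) * (monod a1 b1
          (((1 - s) * δ1 * R01 + s * δ2 * R02) / ((1 - s) * δ1 + s * δ2)) - δ1)
        + s * (monod a2 b2
          (((1 - s) * δ1 * R01 + s * δ2 * R02) / ((1 - s) * δ1 + s * δ2)) - δ2))) ∧
    Tendsto (invasionRate0 a1 b1 a2 b2 δ1 δ2 R01 R02 s)
      (nhdsWithin 0 (Set.Ioi 0)) (nhds
      ((1 - s) * (monod a1 b1 R01 - δ1) + s * (monod a2 b2 R02 - δ2))) := by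
  have h1s : (0:ℝ) < 1 - s := by linarith
  set p : ℝ := s / δ1 with hpdef
  set q : ℝ := (1 - s) / δ2 with hqdef
  have hp : 0 < p := by rw [hpdef]; positivity
  have hq : 0 < q := by rw [hqdef]; positivity
  have hpq : 0 < p + q := by linarith
  have hΦcont : ContinuousOn (Phi a1 b1 a2 b2 δ1 δ2 R01 R02) (Icc 0 1) :=
    Phi_contOn hb1 hb2 hR01 hR
  obtain ⟨L, hL⟩ := Phi_lip ha1 hb1 ha2 hb2 hδ1 hδ2 hR01 hR
  obtain ⟨M, hM0⟩ := isCompact_Icc.exists_bound_of_continuousOn hΦcont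
  have hM : ∀ x ∈ Icc (0:ℝ) 1, |Phi a1 b1 a2 b2 δ1 δ2 R01 R02 x| ≤ M := by
    intro x hx
    have := hM0 x hx
    rwa [Real.norm_eq_abs] at this
  have hfun : invasionRate0 a1 b1 a2 b2 δ1 δ2 R01 R02 s
      = fun lam => (p + q) *
          ((∫ x in (0:ℝ)..1, Phi a1 b1 a2 b2 δ1 δ2 R01 R02 x
              * (x ^ (p * lam - 1) * (1 - x) ^ (q * lam - 1)))
            / ∫ x in (0:ℝ)..1, x ^ (p * lam - 1) * (1 - x) ^ (q * lam - 1)) := by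
    funext lam
    have e1 : s * lam / δ1 = p * lam := by rw [hpdef]; ring
    have e2 : (1 - s) * lam / δ2 = q * lam := by rw [hqdef]; ring
    simp only [invasionRate0, e1, e2, hpdef, hqdef]
  -- algebraic identities
  set m : ℝ := p / (p + q) with hmdef
  have hD : 0 < (1 - s) * δ1 + s * δ2 := by
    have := mul_pos h1s hδ1
    have := mul_pos hs0 hδ2
    linarith
  have hm_eq : (R02 - R01) * m + R01
      = ((1 - s) * δ1 * R01 + s * δ2 * R02) / ((1 - s) * δ1 + s * δ2) := by
    rw [hmdef, hpdef, hqdef]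
    have hsum : 0 < s / δ1 + (1 - s) / δ2 := add_pos (div_pos hs0 hδ1) (div_pos h1s hδ2)
    have hne3 : s / δ1 + (1 - s) / δ2 ≠ 0 := ne_of_gt hsum
    have hneD : (1 - s) * δ1 + s * δ2 ≠ 0 := ne_of_gt hD
    have hm2 : (s / δ1) / (s / δ1 + (1 - s) / δ2) = s * δ2 / ((1 - s) * δ1 + s * δ2) := by
      rw [div_eq_div_iff hne3 hneD]
      field_simp
      ring
    rw [hm2, eq_div_iff hneD]
    field_simp
    ring
  have h1 : (p + q) * (δ2 * (1 - m)) = 1 - s := by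
    rw [hmdef]
    have : 1 - p / (p + q) = q / (p + q) := by field_simp; ring
    rw [this, mul_comm, mul_assoc, div_mul_cancel₀ _ (ne_of_gt hpq), hqdef]
    field_simp
  have h2 : (p + q) * (δ1 * m) = s := by
    rw [hmdef, mul_comm, mul_assoc, div_mul_cancel₀ _ (ne_of_gt hpq), hpdef]
    field_simp
  constructor
  · -- λ → ∞
    have h := (tendsto_ratio_top hp hq hΦcont).const_mul (p + q)
    rw [hfun]
    have hval : (p + q) * Phi a1 b1 a2 b2 δ1 δ2 R01 R02 (p / (p + q))
        = (1 - s) * (monod a1 b1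
            (((1 - s) * δ1 * R01 + s * δ2 * R02) / ((1 - s) * δ1 + s * δ2)) - δ1)
          + s * (monod a2 b2
            (((1 - s) * δ1 * R01 + s * δ2 * R02) / ((1 - s) * δ1 + s * δ2)) - δ2) := by
      have e : (p + q) * Phi a1 b1 a2 b2 δ1 δ2 R01 R02 m
          = ((p + q) * (δ2 * (1 - m))) * (monod a1 b1 ((R02 - R01) * m + R01) - δ1)
            + ((p + q) * (δ1 * m)) * (monod a2 b2 ((R02 - R01) * m + R01) - δ2) := by
        simp only [Phi]; ring
      rw [← hmdef, e, hm_eq, h1, h2]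
    rw [← hval]
    exact h
  · -- λ → 0⁺
    have h := (tendsto_ratio_zero hp hq hΦcont
      (fun x hx => (hL x hx).1) (fun x hx => (hL x hx).2) hM).const_mul (p + q)
    rw [hfun]
    have hΦ0 : Phi a1 b1 a2 b2 δ1 δ2 R01 R02 0 = δ2 * (monod a1 b1 R01 - δ1) := by
      simp [Phi]
    have hΦ1 : Phi a1 b1 a2 b2 δ1 δ2 R01 R02 1 = δ1 * (monod a2 b2 R02 - δ2) := by
      simp [Phi]
    have hval : (p + q) * ((q * Phi a1 b1 a2 b2 δ1 δ2 R01 R02 0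
          + p * Phi a1 b1 a2 b2 δ1 δ2 R01 R02 1) / (p + q))
        = (1 - s) * (monod a1 b1 R01 - δ1) + s * (monod a2 b2 R02 - δ2) := by
      rw [mul_comm, div_mul_cancel₀ _ (ne_of_gt hpq), hΦ0, hΦ1, hpdef, hqdef]
      field_simp
    rw [← hval]
    exact h
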